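/- If f_1, …, f_s ∈ k[X] are polynomials such that k[X]^d = k[f_1, …, f_s] (they generate the ring of constants as a k-algebra), then s ≥ ν(n), the number of minimal elements of the monoid M_n. -/

import Mathlib

open MvPolynomial

section Aux
variable {k : Type*} [Field k] [CharZero k] {n : ℕ} [NeZero n] (ε : k)

/-- character `ZMod n → k` -/
noncomputable def cChi (a : ZMod n) : k := ε ^ a.val

lemma cChi_zero : cChi ε (0 : ZMod n) = 1 := by simp [cChi]

lemma pow_val_mod (hε : ε ^ n = 1) (x : ℕ) : ε ^ (x % n) = ε ^ x := by
  conv_rhs => rw [← Nat.div_add_mod x n, pow_add, pow_mul, hε, one_pow, one_mul]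

lemma cChi_add (hε : ε ^ n = 1) (a b : ZMod n) : cChi ε (a + b) = cChi ε a * cChi ε b := by
  rw [cChi, cChi, cChi, ZMod.val_add, pow_val_mod ε hε, pow_add]

lemma cChi_nat_mul (hε : ε ^ n = 1) (m : ℕ) (a : ZMod n) :
    cChi ε ((m : ZMod n) * a) = cChi ε a ^ m := by
  induction m with
  | zero => simp [cChi_zero]
  | succ m ih => rw [pow_succ, ← ih, ← cChi_add ε hε]; ring_nf
                 rw [Nat.cast_add, Nat.cast_one]; ring_nf

lemma cChi_orth (hε : IsPrimitiveRoot ε n) (c : ZMod n) :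
    ∑ i : ZMod n, cChi ε (i * c) = if c = 0 then (n : k) else 0 := by
  by_cases hc : c = 0
  · simp [hc, cChi_zero, ZMod.card]
  · rw [if_neg hc]
    have h1 : ∀ i : ZMod n, cChi ε (i * c) = cChi ε c ^ i.val := by
      intro i
      conv_lhs => rw [← ZMod.natCast_rightInverse i]
      exact cChi_nat_mul ε hε.pow_eq_one i.val c
    rw [Finset.sum_congr rfl (fun i _ => h1 i)]
    rw [Finset.sum_nbij' (i := fun (a : ZMod n) => a.val) (j := fun (m : ℕ) => (m : ZMod n))
      (t := Finset.range n) (g := fun m => cChi ε c ^ m)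
      (fun a _ => Finset.mem_range.mpr (ZMod.val_lt a))
      (fun m _ => Finset.mem_univ _)
      (fun a _ => ZMod.natCast_rightInverse a)
      (fun m hm => ZMod.val_cast_of_lt (Finset.mem_range.mp hm))
      (fun a _ => rfl)]
    have hne : cChi ε c ≠ 1 := by
      have hvpos : 0 < c.val := Nat.pos_of_ne_zero (fun h => hc (by
        have h2 := ZMod.natCast_rightInverse c
        rw [h, Nat.cast_zero] at h2
        exact h2.symm))
      exact hε.pow_ne_one_of_pos_of_lt hvpos.ne' (ZMod.val_lt c)
    rw [geom_sum_eq hne]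
    have hcn : cChi ε c ^ n = 1 := by
      rw [cChi, ← pow_mul, mul_comm, pow_mul, hε.pow_eq_one, one_pow]
    rw [hcn, sub_self, zero_div]

variable (n) in
/-- "Fourier" substitution: `X i ↦ n⁻¹ ∑ j ζ(ij) X j`. -/
noncomputable def cTau (ε : k) : MvPolynomial (ZMod n) k →ₐ[k] MvPolynomial (ZMod n) k :=
  aeval (fun i : ZMod n => C ((n : k)⁻¹) * ∑ j : ZMod n, C (cChi ε (i * j)) * X j)

variable (n) in
/-- Inverse substitution: `X j ↦ ∑ i ζ(-ij) X i`. -/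
noncomputable def cSig (ε : k) : MvPolynomial (ZMod n) k →ₐ[k] MvPolynomial (ZMod n) k :=
  aeval (fun j : ZMod n => ∑ i : ZMod n, C (cChi ε (-(i * j))) * X i)

lemma cTau_cSig_X (hε : IsPrimitiveRoot ε n) (j : ZMod n) :
    cTau n ε (cSig n ε (X j)) = X j := by
  have hn0 : (n : k) ≠ 0 := Nat.cast_ne_zero.mpr (NeZero.ne n)
  rw [cSig, aeval_X, map_sum]
  have step : ∀ i : ZMod n,
      cTau n ε (C (cChi ε (-(i * j))) * X i)
        = ∑ l : ZMod n, C (cChi ε (-(i * j)) * ((n : k)⁻¹ * cChi ε (i * l))) * X l := by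
    intro i
    rw [map_mul, cTau, aeval_X, aeval_C, algebraMap_eq, Finset.mul_sum, Finset.mul_sum]
    refine Finset.sum_congr rfl fun l _ => ?_
    rw [← mul_assoc, ← mul_assoc, ← C_mul, ← C_mul, mul_assoc (cChi ε (-(i * j)))]
  rw [Finset.sum_congr rfl fun i _ => step i, Finset.sum_comm]
  have inner : ∀ l : ZMod n,
      ∑ i : ZMod n, C (cChi ε (-(i * j)) * ((n : k)⁻¹ * cChi ε (i * l))) * X l
        = C (if l = j then (1 : k) else 0) * X l := by
    intro l
    rw [← Finset.sum_mul, ← map_sum C]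
    congr 2
    have : ∀ i : ZMod n, cChi ε (-(i * j)) * ((n : k)⁻¹ * cChi ε (i * l))
        = (n : k)⁻¹ * cChi ε (i * (l - j)) := by
      intro i
      have : cChi ε (i * (l - j)) = cChi ε (i * l) * cChi ε (-(i * j)) := by
        rw [← cChi_add ε hε.pow_eq_one]; ring_nf
      rw [this]; ring
    rw [Finset.sum_congr rfl fun i _ => this i, ← Finset.mul_sum, cChi_orth ε hε]
    by_cases hlj : l = j
    · simp [hlj, sub_self, hn0]
    · rw [if_neg (fun h => hlj (sub_eq_zero.mp h)), if_neg hlj, mul_zero]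
  rw [Finset.sum_congr rfl fun l _ => inner l, Finset.sum_eq_single j]
  · simp
  · intro l _ hl; rw [if_neg hl]; simp
  · intro h; exact absurd (Finset.mem_univ j) h

lemma cTau_cSig (hε : IsPrimitiveRoot ε n) (p : MvPolynomial (ZMod n) k) :
    cTau n ε (cSig n ε p) = p := by
  have : (cTau n ε).comp (cSig n ε) = AlgHom.id k _ :=
    algHom_ext fun j => by simpa using cTau_cSig_X ε hε j
  simpa using AlgHom.congr_fun this p

variable (n) in
/-- Diagonal derivation `X j ↦ ζ(j) X j`. -/
noncomputable def cD (ε : k) :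
    Derivation k (MvPolynomial (ZMod n) k) (MvPolynomial (ZMod n) k) :=
  mkDerivation k (fun j : ZMod n => cChi ε j • X j)

variable (n) in
/-- Weight of a monomial. -/
noncomputable def cW (ε : k) (m : ZMod n →₀ ℕ) : k := ∑ j : ZMod n, (m j : k) * cChi ε j

lemma cD_monomial (s : ZMod n →₀ ℕ) (c : k) :
    cD n ε (monomial s c) = cW n ε s • monomial s c := by
  rw [cD, mkDerivation_monomial]
  have step : ∀ i ∈ s.support,
      (monomial (s - Finsupp.single i 1) (s i : k)) • (cChi ε i • X i)
        = (((s i : k) * cChi ε i) • monomial s 1 : MvPolynomial (ZMod n) k) := by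
    intro i hi
    have hs : s - Finsupp.single i 1 + Finsupp.single i 1 = s := by
      ext j
      simp only [Finsupp.coe_add, Finsupp.coe_tsub, Pi.add_apply, Pi.sub_apply,
        Finsupp.single_apply]
      by_cases hji : i = j
      · subst hji
        have h1 : 1 ≤ s i := Nat.one_le_iff_ne_zero.mpr (Finsupp.mem_support_iff.mp hi)
        simp only [eq_self_iff_true, if_true]
        omega
      · simp [hji]
    rw [smul_eq_mul, mul_smul_comm, X, monomial_mul, mul_one, hs]
    rw [show (monomial s ((s i : ℕ) : k) : MvPolynomial (ZMod n) k)
        = (s i : k) • monomial s 1 by rw [smul_monomial, smul_eq_mul, mul_one]]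
    rw [smul_smul, mul_comm]
  rw [Finsupp.sum, Finset.sum_congr rfl step, ← Finset.sum_smul]
  have hsum : ∑ i ∈ s.support, (s i : k) * cChi ε i = cW n ε s := by
    rw [cW]
    refine Finset.sum_subset (Finset.subset_univ _) ?_
    intro j _ hj
    rw [Finsupp.notMem_support_iff.mp hj]
    simp
  rw [hsum, smul_comm, smul_monomial, smul_eq_mul, mul_one]

lemma cD_coeff (p : MvPolynomial (ZMod n) k) (m : ZMod n →₀ ℕ) :
    coeff m (cD n ε p) = cW n ε m * coeff m p := by
  induction p using MvPolynomial.induction_on' with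
  | monomial s c =>
    rw [cD_monomial, coeff_smul, smul_eq_mul]
    rcases eq_or_ne s m with rfl | hsm
    · rfl
    · rw [coeff_monomial, if_neg hsm, mul_zero, mul_zero]
  | add p q hp hq =>
    rw [map_add, coeff_add, coeff_add, hp, hq, mul_add]

lemma cD_X (j : ZMod n) : cD n ε (X j) = cChi ε j • X j := mkDerivation_X _ _ _

lemma cD_cTau_X (hε : IsPrimitiveRoot ε n) (i : ZMod n) :
    cD n ε (cTau n ε (X i)) = cTau n ε (X (i + 1)) := by
  rw [cTau, aeval_X, aeval_X]
  have h1 : ∀ a : ZMod n, (C ((n : k)⁻¹) * ∑ j : ZMod n, C (cChi ε (a * j)) * X j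
      : MvPolynomial (ZMod n) k) = (n : k)⁻¹ • ∑ j : ZMod n, cChi ε (a * j) • X j := by
    intro a
    rw [smul_eq_C_mul]
    congr 1
    exact Finset.sum_congr rfl fun j _ => (smul_eq_C_mul _ _).symm
  rw [h1, h1, Derivation.map_smul, map_sum]
  congr 1
  refine Finset.sum_congr rfl fun j _ => ?_
  rw [Derivation.map_smul, cD_X, smul_smul, ← cChi_add ε hε.pow_eq_one]
  congr 2
  ring

lemma cTau_d (hε : IsPrimitiveRoot ε n)
    (d : Derivation k (MvPolynomial (ZMod n) k) (MvPolynomial (ZMod n) k))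
    (hd : ∀ j : ZMod n, d (X j) = X (j + 1)) (p : MvPolynomial (ZMod n) k) :
    cTau n ε (d p) = cD n ε (cTau n ε p) := by
  induction p using MvPolynomial.induction_on with
  | C a =>
    rw [← algebraMap_eq, Derivation.map_algebraMap, map_zero, AlgHom.commutes,
      Derivation.map_algebraMap]
  | add p q hp hq => rw [map_add, map_add, map_add, map_add, hp, hq]
  | mul_X p i hp =>
    rw [Derivation.leibniz, hd, smul_eq_mul, smul_eq_mul, map_add, map_mul, map_mul, hp,
      map_mul (cTau n ε), Derivation.leibniz, smul_eq_mul, smul_eq_mul, cD_cTau_X ε hε]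

lemma d_cSig_X (hε : IsPrimitiveRoot ε n)
    (d : Derivation k (MvPolynomial (ZMod n) k) (MvPolynomial (ZMod n) k))
    (hd : ∀ j : ZMod n, d (X j) = X (j + 1)) (j : ZMod n) :
    d (cSig n ε (X j)) = cChi ε j • cSig n ε (X j) := by
  rw [cSig, aeval_X]
  have h1 : (∑ i : ZMod n, C (cChi ε (-(i * j))) * X i : MvPolynomial (ZMod n) k)
      = ∑ i : ZMod n, cChi ε (-(i * j)) • X i :=
    Finset.sum_congr rfl fun i _ => (smul_eq_C_mul _ _).symm
  rw [h1, map_sum]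
  have h2 : ∀ i : ZMod n, d (cChi ε (-(i * j)) • X i) = cChi ε (-(i * j)) • X (i + 1) := by
    intro i
    rw [Derivation.map_smul, hd]
  rw [Finset.sum_congr rfl fun i _ => h2 i, Finset.smul_sum]
  refine Fintype.sum_equiv (Equiv.addRight (1 : ZMod n)) _ _ fun i => ?_
  simp only [Equiv.coe_addRight]
  rw [smul_smul, ← cChi_add ε hε.pow_eq_one]
  congr 2
  ring

lemma d_cSig (hε : IsPrimitiveRoot ε n)
    (d : Derivation k (MvPolynomial (ZMod n) k) (MvPolynomial (ZMod n) k))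
    (hd : ∀ j : ZMod n, d (X j) = X (j + 1)) (p : MvPolynomial (ZMod n) k) :
    d (cSig n ε p) = cSig n ε (cD n ε p) := by
  induction p using MvPolynomial.induction_on with
  | C a =>
    rw [← algebraMap_eq, AlgHom.commutes, Derivation.map_algebraMap, Derivation.map_algebraMap,
      map_zero]
  | add p q hp hq => rw [map_add, map_add, map_add, map_add, hp, hq]
  | mul_X p i hp =>
    rw [map_mul, Derivation.leibniz, smul_eq_mul, smul_eq_mul, d_cSig_X ε hε d hd, hp,
      Derivation.leibniz, cD_X, map_add, smul_eq_mul, smul_eq_mul, map_mul, map_mul,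
      map_smul]

variable (n) in
/-- Convert a finitely supported exponent on `ZMod n` to a tuple on `Fin n`. -/
def toFn (p : ZMod n →₀ ℕ) : Fin n → ℕ := fun i => p ((i : ℕ) : ZMod n)

variable (n) in
/-- Convert a tuple on `Fin n` to a finitely supported exponent on `ZMod n`. -/
noncomputable def toZm (α : Fin n → ℕ) : ZMod n →₀ ℕ :=
  Finsupp.equivFunOnFinite.symm (fun j : ZMod n => α ⟨j.val, ZMod.val_lt j⟩)

lemma toZm_apply (α : Fin n → ℕ) (j : ZMod n) : toZm n α j = α ⟨j.val, ZMod.val_lt j⟩ := rfl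

lemma toFn_toZm (α : Fin n → ℕ) : toFn n (toZm n α) = α := by
  funext i
  rw [toFn, toZm_apply]
  congr 1
  exact Fin.ext (ZMod.val_cast_of_lt i.isLt)

lemma toZm_toFn (p : ZMod n →₀ ℕ) : toZm n (toFn n p) = p := by
  ext j
  rw [toZm_apply, toFn]
  congr 1
  exact ZMod.natCast_rightInverse j

lemma toFn_add (p q : ZMod n →₀ ℕ) : toFn n (p + q) = toFn n p + toFn n q := by
  funext i
  simp [toFn]

lemma toZm_zero : toZm n (0 : Fin n → ℕ) = 0 := by
  ext j
  simp [toZm_apply]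

/-- The equivalence `Fin n ≃ ZMod n`. -/
def finZmodEquiv : Fin n ≃ ZMod n where
  toFun i := ((i : ℕ) : ZMod n)
  invFun j := ⟨j.val, ZMod.val_lt j⟩
  left_inv i := Fin.ext (ZMod.val_cast_of_lt i.isLt)
  right_inv j := ZMod.natCast_rightInverse j

lemma cW_toFn (p : ZMod n →₀ ℕ) :
    ∑ i : Fin n, ((toFn n p i : ℕ) : k) * ε ^ (i : ℕ) = cW n ε p := by
  rw [cW]
  refine Fintype.sum_equiv finZmodEquiv _ _ fun i => ?_
  rw [cChi]
  have h1 : (finZmodEquiv i).val = (i : ℕ) := ZMod.val_cast_of_lt i.isLt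
  rw [h1]
  rfl

lemma cW_toZm (α : Fin n → ℕ) :
    cW n ε (toZm n α) = ∑ i : Fin n, ((α i : ℕ) : k) * ε ^ (i : ℕ) := by
  conv_rhs => rw [← toFn_toZm (n := n) α]
  exact (cW_toFn ε (toZm n α)).symm

end Aux


/-- The monoid `M_n` of all `α ∈ ℕ^n` with `α_0 + α_1 ε + ⋯ + α_{n-1} ε^{n-1} = 0`. -/
def cycMonoid (n : ℕ) {k : Type*} [Field k] (ε : k) : Set (Fin n → ℕ) :=
  {α | ∑ i : Fin n, (α i : k) * ε ^ (i : ℕ) = 0}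

/-- The set of minimal elements of `M_n`: nonzero elements that are not the sum of two
nonzero elements of `M_n`. -/
def cycMinimal (n : ℕ) {k : Type*} [Field k] (ε : k) : Set (Fin n → ℕ) :=
  {α ∈ cycMonoid n ε | α ≠ 0 ∧
    ¬∃ β γ : Fin n → ℕ, β ∈ cycMonoid n ε ∧ γ ∈ cycMonoid n ε ∧ β ≠ 0 ∧ γ ≠ 0 ∧ α = β + γ}

/-- If `f_1,…,f_s` generate the ring of constants `k[X]^d` of the
cyclotomic derivation as a `k`-algebra, then `s ≥ ν(n)`, the number of minimal elements
of the monoid `M_n`. -/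
theorem stmt_10 {k : Type*} [Field k] [CharZero k] (n : ℕ) (hn : 3 ≤ n)
    (ε : k) (hε : IsPrimitiveRoot ε n)
    (d : Derivation k (MvPolynomial (ZMod n) k) (MvPolynomial (ZMod n) k))
    (hd : ∀ j : ZMod n, d (X j) = X (j + 1))
    (s : ℕ) (f : Fin s → MvPolynomial (ZMod n) k)
    (hgen : {F : MvPolynomial (ZMod n) k | d F = 0} = ↑(Algebra.adjoin k (Set.range f))) :
    (cycMinimal n ε).ncard ≤ s := by
  haveI : NeZero n := ⟨by omega⟩
  classical
  by_cases hinf : (cycMinimal n ε).Infinite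
  · rw [Set.Infinite.ncard hinf]
    exact Nat.zero_le s
  rw [Set.not_infinite] at hinf
  haveI : Fintype ↥(cycMinimal n ε) := hinf.fintype
  -- the coefficient functional
  set L : MvPolynomial (ZMod n) k → (↥(cycMinimal n ε) → k) :=
    fun F α => coeff (toZm n α.1) (cTau n ε F) with hL
  set v : Fin s → (↥(cycMinimal n ε) → k) := fun i => L (f i) with hv
  have hdconst : ∀ F ∈ Algebra.adjoin k (Set.range f), d F = 0 := by
    intro F hF
    have : F ∈ {F : MvPolynomial (ZMod n) k | d F = 0} := by rw [hgen]; exact hF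
    exact this
  have hsupp : ∀ F, d F = 0 → ∀ m : ZMod n →₀ ℕ, coeff m (cTau n ε F) ≠ 0 → cW n ε m = 0 := by
    intro F hF m hm
    have h0 : cD n ε (cTau n ε F) = 0 := by rw [← cTau_d ε hε d hd, hF, map_zero]
    have h1 := cD_coeff ε (cTau n ε F) m
    rw [h0, coeff_zero] at h1
    rcases mul_eq_zero.mp h1.symm with h | h
    · exact h
    · exact absurd h hm
  have hTne : ∀ (α : ↥(cycMinimal n ε)), toZm n α.1 ≠ 0 := by
    intro α h
    refine α.2.2.1 ?_
    have := congrArg (toFn n) h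
    rwa [toFn_toZm, ← toZm_zero, toFn_toZm] at this
  -- Every constant has its minimal-coefficient vector in the span of the v i
  have key : ∀ F ∈ Algebra.adjoin k (Set.range f),
      L F ∈ Submodule.span k (Set.range v) := by
    intro F hF
    induction hF using Algebra.adjoin_induction with
    | mem x hx =>
      rcases hx with ⟨i, rfl⟩
      exact Submodule.subset_span ⟨i, rfl⟩
    | algebraMap r =>
      have hz : L (algebraMap k (MvPolynomial (ZMod n) k) r) = 0 := by
        funext α
        rw [hL]
        show coeff (toZm n α.1) (cTau n ε (algebraMap k _ r)) = 0
        rw [AlgHom.commutes, algebraMap_eq, coeff_C, if_neg (fun h => hTne α h.symm)]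
      rw [hz]
      exact Submodule.zero_mem _
    | add x y hx hy ihx ihy =>
      have hz : L (x + y) = L x + L y := by
        funext α
        show coeff (toZm n α.1) (cTau n ε (x + y)) = _
        rw [map_add, coeff_add]
        rfl
      rw [hz]
      exact Submodule.add_mem _ ihx ihy
    | mul x y hx hy ihx ihy =>
      have hx0 := hsupp x (hdconst x hx)
      have hy0 := hsupp y (hdconst y hy)
      have hz : L (x * y) =
          coeff 0 (cTau n ε x) • L y + coeff 0 (cTau n ε y) • L x := by
        funext α
        show coeff (toZm n α.1) (cTau n ε (x * y)) = _
        rw [map_mul, coeff_mul]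
        have hmain : ∑ p ∈ Finset.HasAntidiagonal.antidiagonal (toZm n α.1),
            coeff p.1 (cTau n ε x) * coeff p.2 (cTau n ε y)
            = coeff 0 (cTau n ε x) * coeff (toZm n α.1) (cTau n ε y)
              + coeff (toZm n α.1) (cTau n ε x) * coeff 0 (cTau n ε y) := by
          rw [Finset.sum_eq_add_of_mem ((0 : ZMod n →₀ ℕ), toZm n α.1) (toZm n α.1, (0 : ZMod n →₀ ℕ))
            (by rw [Finset.HasAntidiagonal.mem_antidiagonal]; exact zero_add _)
            (by rw [Finset.HasAntidiagonal.mem_antidiagonal]; exact add_zero _)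
            (by intro h; exact hTne α (congrArg Prod.fst h).symm)]
          intro c hc hcne
          rw [Finset.HasAntidiagonal.mem_antidiagonal] at hc
          have hc1 : c.1 ≠ 0 := by
            intro h0
            refine hcne.1 ?_
            have : c.2 = toZm n α.1 := by rw [← hc, h0, zero_add]
            exact Prod.ext h0 this
          have hc2 : c.2 ≠ 0 := by
            intro h0
            refine hcne.2 ?_
            have : c.1 = toZm n α.1 := by rw [← hc, h0, add_zero]
            exact Prod.ext this h0
          by_cases hcx : coeff c.1 (cTau n ε x) = 0
          · rw [hcx, zero_mul]
          by_cases hcy : coeff c.2 (cTau n ε y) = 0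
          · rw [hcy, mul_zero]
          exfalso
          refine α.2.2.2 ⟨toFn n c.1, toFn n c.2, ?_, ?_, ?_, ?_, ?_⟩
          · show ∑ i : Fin n, ((toFn n c.1 i : ℕ) : k) * ε ^ (i : ℕ) = 0
            rw [cW_toFn]
            exact hx0 c.1 hcx
          · show ∑ i : Fin n, ((toFn n c.2 i : ℕ) : k) * ε ^ (i : ℕ) = 0
            rw [cW_toFn]
            exact hy0 c.2 hcy
          · intro h
            exact hc1 (by rw [← toZm_toFn (n := n) c.1, h, toZm_zero])
          · intro h
            exact hc2 (by rw [← toZm_toFn (n := n) c.2, h, toZm_zero])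
          · rw [← toFn_toZm (n := n) α.1, ← hc, toFn_add]
        rw [hmain]
        show _ = coeff 0 (cTau n ε x) * coeff (toZm n α.1) (cTau n ε y)
          + coeff 0 (cTau n ε y) * coeff (toZm n α.1) (cTau n ε x)
        ring
      rw [hz]
      exact Submodule.add_mem _ (Submodule.smul_mem _ _ ihy) (Submodule.smul_mem _ _ ihx)
  -- indicator vectors are in the span
  have hsingle : ∀ α : ↥(cycMinimal n ε),
      (fun β : ↥(cycMinimal n ε) => if α = β then (1 : k) else 0)
        ∈ Submodule.span k (Set.range v) := by
    intro α
    have hW : cW n ε (toZm n α.1) = 0 := by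
      rw [cW_toZm]
      exact α.2.1
    have hdF : d (cSig n ε (monomial (toZm n α.1) 1)) = 0 := by
      rw [d_cSig ε hε d hd, cD_monomial, hW, zero_smul, map_zero]
    have hFmem : cSig n ε (monomial (toZm n α.1) 1) ∈ Algebra.adjoin k (Set.range f) := by
      have : cSig n ε (monomial (toZm n α.1) 1) ∈ {F : MvPolynomial (ZMod n) k | d F = 0} := hdF
      rwa [hgen] at this
    have hLF : L (cSig n ε (monomial (toZm n α.1) 1))
        = fun β : ↥(cycMinimal n ε) => if α = β then (1 : k) else 0 := by
      funext β
      show coeff (toZm n β.1) (cTau n ε (cSig n ε (monomial (toZm n α.1) 1))) = _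
      rw [cTau_cSig ε hε, coeff_monomial]
      by_cases hab : α = β
      · rw [if_pos (by rw [hab]), if_pos hab]
      · rw [if_neg ?_, if_neg hab]
        intro h
        refine hab (Subtype.ext ?_)
        rw [← toFn_toZm (n := n) α.1, h, toFn_toZm]
    rw [← hLF]
    exact key _ hFmem
  -- conclude by a rank bound
  have htop : Submodule.span k (Set.range v) = ⊤ := by
    rw [eq_top_iff]
    intro x _
    rw [pi_eq_sum_univ x]
    exact Submodule.sum_mem _ fun α _ => Submodule.smul_mem _ _ (hsingle α)
  have hrank := finrank_le_of_span_eq_top htop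
  rw [Module.finrank_fintype_fun_eq_card, Fintype.card_fin] at hrank
  rwa [Set.ncard_eq_toFinset_card', Set.toFinset_card]
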